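/- Let Φ ∈ S₂(E, E_*) and ℋ its de Branges–Rovnyak model. As Hilbert spaces, ℋ equals the operator range of [[I, 0],[Φ*, Δ]] and also the operator range of [[Δ_*, Φ],[0, I]], where Δ = (I − Φ*Φ)^{1/2} and Δ_* = (I − ΦΦ*)^{1/2}. Consequently, ℋ = {(f, g) : f ∈ L²(E_*), g ∈ L²(E), g − Φ*f ∈ Δ L²(E)} = {(f, g) : f ∈ L²(E_*), g ∈ L²(E), f − Φg ∈ Δ_* L²(E_*)} as sets. -/

import Mathlib

/- STATEMENT 6: Let Φ ∈ S₂(E,E_*) and ℋ its de Branges–Rovnyak model, the operator range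
of S = [[I,Φ],[Φ*,I]]^{1/2}.  With Δ = (I − Φ*Φ)^{1/2}, Δ_* = (I − ΦΦ*)^{1/2}, ℋ equals,
as a Hilbert space, the operator range of A₁ = [[I,0],[Φ*,Δ]] and of A₂ = [[Δ_*,Φ],[0,I]];
consequently, as sets,
ℋ = {(f,g) : g − Φ*f ∈ Δ L²(E)} = {(f,g) : f − Φg ∈ Δ_* L²(E_*)}.

Equality as Hilbert spaces: equality of the ranges together with equality of the
operator-range norms on them (encoded via ipS, ipA1, ipA2). -/

open scoped ComplexInnerProductSpace

noncomputable def c1 {A B : Type*} [NormedAddCommGroup A] [NormedAddCommGroup B]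
    (x : WithLp 2 (A × B)) : A := (WithLp.equiv 2 (A × B) x).1

noncomputable def c2 {A B : Type*} [NormedAddCommGroup A] [NormedAddCommGroup B]
    (x : WithLp 2 (A × B)) : B := (WithLp.equiv 2 (A × B) x).2

noncomputable def pr {A B : Type*} [NormedAddCommGroup A] [NormedAddCommGroup B]
    (f : A) (g : B) : WithLp 2 (A × B) := (WithLp.equiv 2 (A × B)).symm (f, g)

open ContinuousLinearMap in
/-- Auxiliary limit-transfer lemma: if `‖B u‖ = ‖C u‖` for all `u`, then any element of the
closure of the range of `B` has a "companion" in the closure of the range of `C` with the same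
norm, intertwined by any pair of operators `D, E` with `D ∘ B = E ∘ C`. -/
lemma dbr_lift {H : Type*} [NormedAddCommGroup H] [InnerProductSpace ℂ H] [CompleteSpace H]
    (B C : H →L[ℂ] H) (hnorm : ∀ u, ‖B u‖ = ‖C u‖)
    (x : H) (hx : x ∈ closure (Set.range B)) :
    ∃ y ∈ closure (Set.range C), ‖y‖ = ‖x‖ ∧
      ∀ D E : H →L[ℂ] H, D ∘L B = E ∘L C → D x = E y := by
  obtain ⟨u, hu, hux⟩ := mem_closure_iff_seq_limit.mp hx
  choose v hv using hu
  have hBv : Filter.Tendsto (fun n => B (v n)) Filter.atTop (nhds x) := by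
    simpa only [hv] using hux
  have hdist : ∀ m n, dist (C (v m)) (C (v n)) = dist (B (v m)) (B (v n)) := by
    intro m n
    rw [dist_eq_norm, dist_eq_norm, ← map_sub, ← map_sub, hnorm]
  have hcauchy : CauchySeq fun n => C (v n) := by
    have h1 : CauchySeq fun n => B (v n) := hBv.cauchySeq
    rw [Metric.cauchySeq_iff] at h1 ⊢
    intro ε hε
    obtain ⟨N, hN⟩ := h1 ε hε
    exact ⟨N, fun m hm n hn => (hdist m n) ▸ hN m hm n hn⟩
  obtain ⟨y, hy⟩ := cauchySeq_tendsto_of_complete hcauchy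
  refine ⟨y, ?_, ?_, ?_⟩
  · exact mem_closure_of_tendsto hy (Filter.Eventually.of_forall fun n => Set.mem_range_self _)
  · have h1 : Filter.Tendsto (fun n => ‖C (v n)‖) Filter.atTop (nhds ‖y‖) := hy.norm
    have h2 : Filter.Tendsto (fun n => ‖C (v n)‖) Filter.atTop (nhds ‖x‖) := by
      simpa only [← hnorm] using hBv.norm
    exact tendsto_nhds_unique h1 h2
  · intro D E hDE
    have h1 : Filter.Tendsto (fun n => D (B (v n))) Filter.atTop (nhds (D x)) :=
      (D.continuous.tendsto x).comp hBv
    have h2 : Filter.Tendsto (fun n => E (C (v n))) Filter.atTop (nhds (E y)) :=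
      (E.continuous.tendsto y).comp hy
    have h3 : ∀ n, D (B (v n)) = E (C (v n)) := fun n => by
      have := ContinuousLinearMap.ext_iff.mp hDE (v n)
      simpa using this
    rw [show (fun n => D (B (v n))) = fun n => E (C (v n)) from funext h3] at h1
    exact tendsto_nhds_unique h1 h2

open ContinuousLinearMap in
/-- `(ker A)ᗮ` is the closure of the range of the adjoint. -/
lemma dbr_ker_orth {H : Type*} [NormedAddCommGroup H] [InnerProductSpace ℂ H] [CompleteSpace H]
    (A : H →L[ℂ] H) (x : H) :
    x ∈ (LinearMap.ker (A : H →ₗ[ℂ] H))ᗮ ↔ x ∈ closure (Set.range (adjoint A)) := by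
  have hset : (closure (Set.range (adjoint A)) : Set H)
      = ((LinearMap.range ((adjoint A : H →L[ℂ] H) : H →ₗ[ℂ] H) : Submodule ℂ H).topologicalClosure : Set H) := by
    rfl
  constructor
  · intro hx
    have : x ∈ (LinearMap.range ((adjoint A : H →L[ℂ] H) : H →ₗ[ℂ] H) : Submodule ℂ H)ᗮᗮ := by
      intro w hw
      have hwker : w ∈ LinearMap.ker (A : H →ₗ[ℂ] H) := by
        have h1 : ⟪(adjoint A) (A w), w⟫ = 0 :=
          hw _ (LinearMap.mem_range_self _ (A w))
        have h2 : ⟪A w, A w⟫ = 0 := by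
          rwa [adjoint_inner_left] at h1
        simpa [inner_self_eq_zero] using h2
      exact (Submodule.mem_orthogonal _ _).mp hx w hwker
    rw [Submodule.orthogonal_orthogonal_eq_closure] at this
    exact this
  · intro hx
    rw [hset] at hx
    rw [← Submodule.orthogonal_orthogonal_eq_closure] at hx
    intro w hw
    refine hx w ?_
    intro u hu
    obtain ⟨t, rfl⟩ := hu
    rw [ContinuousLinearMap.coe_coe, adjoint_inner_left]
    rw [show A w = 0 from LinearMap.mem_ker.mp hw, inner_zero_right]

open ContinuousLinearMap in
/-- Douglas-type lemma: if `S` is self-adjoint and `S² = A A*`, then `S` and `A` have the same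
range, and every element of the range has preimages in `(ker S)ᗮ` resp. `(ker A)ᗮ` of equal
norm. -/
lemma dbr_douglas {H : Type*} [NormedAddCommGroup H] [InnerProductSpace ℂ H] [CompleteSpace H]
    (S A : H →L[ℂ] H) (hS : IsSelfAdjoint S) (hSA : S ∘L S = A ∘L adjoint A) :
    Set.range S = Set.range A ∧
      ∀ z ∈ Set.range S, ∃ x ∈ (LinearMap.ker (S : H →ₗ[ℂ] H))ᗮ, ∃ y ∈ (LinearMap.ker (A : H →ₗ[ℂ] H))ᗮ,
        S x = z ∧ A y = z ∧ ‖x‖ = ‖y‖ := by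
  have hadjS : adjoint S = S := hS.adjoint_eq
  have hnorm : ∀ u, ‖S u‖ = ‖adjoint A u‖ := by
    intro u
    have e1 : ⟪S u, S u⟫ = ⟪u, S (S u)⟫ := by
      have h := adjoint_inner_left S (S u) u
      rwa [hadjS] at h
    have e2 : S (S u) = A (adjoint A u) := by
      have := ContinuousLinearMap.ext_iff.mp hSA u
      simpa using this
    have e3 : ⟪u, A (adjoint A u)⟫ = ⟪adjoint A u, adjoint A u⟫ :=
      (adjoint_inner_left A (adjoint A u) u).symm
    have e4 : ⟪S u, S u⟫ = ⟪adjoint A u, adjoint A u⟫ := by rw [e1, e2, e3]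
    have e5 : ‖S u‖ ^ 2 = ‖adjoint A u‖ ^ 2 := by
      rw [← inner_self_eq_norm_sq (𝕜 := ℂ), ← inner_self_eq_norm_sq (𝕜 := ℂ), e4]
    nlinarith [norm_nonneg (S u), norm_nonneg (adjoint A u)]
  have hkerS : ∀ x, x ∈ (LinearMap.ker (S : H →ₗ[ℂ] H))ᗮ ↔ x ∈ closure (Set.range S) := fun x =>
    (dbr_ker_orth S x).trans (by rw [hadjS])
  have hkerA : ∀ x, x ∈ (LinearMap.ker (A : H →ₗ[ℂ] H))ᗮ ↔ x ∈ closure (Set.range (adjoint A)) :=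
    dbr_ker_orth A
  haveI : CompleteSpace (LinearMap.ker (S : H →ₗ[ℂ] H)) := S.isClosed_ker.completeSpace_coe
  haveI : CompleteSpace (LinearMap.ker (A : H →ₗ[ℂ] H)) := A.isClosed_ker.completeSpace_coe
  have hmain : ∀ z ∈ Set.range S, ∃ x ∈ (LinearMap.ker (S : H →ₗ[ℂ] H))ᗮ, ∃ y ∈ (LinearMap.ker (A : H →ₗ[ℂ] H))ᗮ,
      S x = z ∧ A y = z ∧ ‖x‖ = ‖y‖ := by
    rintro z ⟨w, rfl⟩
    obtain ⟨a, ha, b, hb, rfl⟩ := (LinearMap.ker (S : H →ₗ[ℂ] H)).exists_add_mem_mem_orthogonal w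
    have hSw : S (a + b) = S b := by
      rw [map_add, show S a = 0 from LinearMap.mem_ker.mp ha, zero_add]
    have hbcl : b ∈ closure (Set.range S) := (hkerS b).mp hb
    obtain ⟨y, hycl, hyn, hyD⟩ := dbr_lift S (adjoint A) hnorm b hbcl
    refine ⟨b, hb, y, (hkerA y).mpr hycl, hSw.symm, ?_, hyn.symm⟩
    rw [hSw]
    exact (hyD S A hSA).symm
  have hsub : Set.range A ⊆ Set.range S := by
    rintro z ⟨w, rfl⟩
    obtain ⟨a, ha, b, hb, rfl⟩ := (LinearMap.ker (A : H →ₗ[ℂ] H)).exists_add_mem_mem_orthogonal w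
    have hAw : A (a + b) = A b := by
      rw [map_add, show A a = 0 from LinearMap.mem_ker.mp ha, zero_add]
    have hbcl : b ∈ closure (Set.range (adjoint A)) := (hkerA b).mp hb
    obtain ⟨y, hycl, hyn, hyD⟩ := dbr_lift (adjoint A) S (fun u => (hnorm u).symm) b hbcl
    refine ⟨y, ?_⟩
    rw [hAw, hyD A S hSA.symm]
  refine ⟨Set.Subset.antisymm ?_ hsub, hmain⟩
  rintro z hz
  obtain ⟨x, _, y, _, _, hAy, _⟩ := hmain z hz
  exact ⟨y, hAy⟩

theorem stmt_6 {L2E L2Es : Type*}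
    [NormedAddCommGroup L2E] [InnerProductSpace ℂ L2E] [CompleteSpace L2E]
    [NormedAddCommGroup L2Es] [InnerProductSpace ℂ L2Es] [CompleteSpace L2Es]
    (MΦ : L2E →L[ℂ] L2Es) (hMΦ : ‖MΦ‖ ≤ 1)
    -- S = [[I,Φ],[Φ*,I]]^{1/2}:
    (S : WithLp 2 (L2Es × L2E) →L[ℂ] WithLp 2 (L2Es × L2E))
    (hS : IsSelfAdjoint S) (hSpos : ∀ x, 0 ≤ (⟪S x, x⟫).re)
    (hS2 : ∀ (f : L2Es) (g : L2E),
      S (S (pr f g)) = pr (f + MΦ g) (ContinuousLinearMap.adjoint MΦ f + g))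
    -- Δ = (I − Φ*Φ)^{1/2} on L²(E) and Δ_* = (I − ΦΦ*)^{1/2} on L²(E_*):
    (Δ : L2E →L[ℂ] L2E) (hΔ : IsSelfAdjoint Δ) (hΔpos : ∀ g, 0 ≤ (⟪Δ g, g⟫).re)
    (hΔ2 : Δ ∘L Δ = 1 - ContinuousLinearMap.adjoint MΦ ∘L MΦ)
    (Δs : L2Es →L[ℂ] L2Es) (hΔs : IsSelfAdjoint Δs) (hΔspos : ∀ f, 0 ≤ (⟪Δs f, f⟫).re)
    (hΔs2 : Δs ∘L Δs = 1 - MΦ ∘L ContinuousLinearMap.adjoint MΦ)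
    -- the block operators A₁ = [[I,0],[Φ*,Δ]] and A₂ = [[Δ_*,Φ],[0,I]]:
    (A1 A2 : WithLp 2 (L2Es × L2E) →L[ℂ] WithLp 2 (L2Es × L2E))
    (hA1 : ∀ (f : L2Es) (g : L2E),
      A1 (pr f g) = pr f (ContinuousLinearMap.adjoint MΦ f + Δ g))
    (hA2 : ∀ (f : L2Es) (g : L2E), A2 (pr f g) = pr (Δs f + MΦ g) g)
    -- the operator-range inner products:
    (ipS ipA1 ipA2 : WithLp 2 (L2Es × L2E) → WithLp 2 (L2Es × L2E) → ℂ)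
    (hipS : ∀ x y, x ∈ (LinearMap.ker (S : WithLp 2 (L2Es × L2E) →ₗ[ℂ] WithLp 2 (L2Es × L2E)))ᗮ → ipS (S x) (S y) = ⟪x, y⟫)
    (hipA1 : ∀ x y, x ∈ (LinearMap.ker (A1 : WithLp 2 (L2Es × L2E) →ₗ[ℂ] WithLp 2 (L2Es × L2E)))ᗮ → ipA1 (A1 x) (A1 y) = ⟪x, y⟫)
    (hipA2 : ∀ x y, x ∈ (LinearMap.ker (A2 : WithLp 2 (L2Es × L2E) →ₗ[ℂ] WithLp 2 (L2Es × L2E)))ᗮ → ipA2 (A2 x) (A2 y) = ⟪x, y⟫) :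
    -- ℋ = M(A₁) = M(A₂) as Hilbert spaces:
    Set.range S = Set.range A1 ∧ Set.range S = Set.range A2 ∧
      (∀ z ∈ Set.range S, ipS z z = ipA1 z z ∧ ipS z z = ipA2 z z) ∧
      -- and as sets:
      Set.range S = {p | c2 p - ContinuousLinearMap.adjoint MΦ (c1 p) ∈ Set.range Δ} ∧
      Set.range S = {p | c1 p - MΦ (c2 p) ∈ Set.range Δs} := by
  have hΔflip : ∀ (a b : L2E), ⟪a, Δ b⟫ = ⟪Δ a, b⟫ := by
    intro a b
    nth_rewrite 1 [← hΔ.adjoint_eq]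
    rw [ContinuousLinearMap.adjoint_inner_right]
  have hΔsflip : ∀ (a b : L2Es), ⟪a, Δs b⟫ = ⟪Δs a, b⟫ := by
    intro a b
    nth_rewrite 1 [← hΔs.adjoint_eq]
    rw [ContinuousLinearMap.adjoint_inner_right]
  -- pointwise versions of hΔ2, hΔs2
  have hΔ2' : ∀ g, Δ (Δ g) = g - ContinuousLinearMap.adjoint MΦ (MΦ g) := by
    intro g
    have := ContinuousLinearMap.ext_iff.mp hΔ2 g
    simpa using this
  have hΔs2' : ∀ f, Δs (Δs f) = f - MΦ (ContinuousLinearMap.adjoint MΦ f) := by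
    intro f
    have := ContinuousLinearMap.ext_iff.mp hΔs2 f
    simpa using this
  -- adjoint of A1
  have hA1adj : ∀ (f : L2Es) (g : L2E),
      ContinuousLinearMap.adjoint A1 (pr f g) = pr (f + MΦ g) (Δ g) := by
    intro f g
    apply ext_inner_right ℂ
    intro v
    rw [ContinuousLinearMap.adjoint_inner_left]
    have key : ∀ (f' : L2Es) (g' : L2E),
        ⟪pr f g, A1 (pr f' g')⟫ = ⟪pr (f + MΦ g) (Δ g), pr f' g'⟫ := by
      intro f' g'
      rw [hA1]
      show ⟪f, f'⟫ + ⟪g, ContinuousLinearMap.adjoint MΦ f' + Δ g'⟫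
        = ⟪f + MΦ g, f'⟫ + ⟪Δ g, g'⟫
      rw [inner_add_right, inner_add_left, ContinuousLinearMap.adjoint_inner_right,
        hΔflip]
      ring
    exact key (c1 v) (c2 v)
  -- adjoint of A2
  have hA2adj : ∀ (f : L2Es) (g : L2E),
      ContinuousLinearMap.adjoint A2 (pr f g)
        = pr (Δs f) (ContinuousLinearMap.adjoint MΦ f + g) := by
    intro f g
    apply ext_inner_right ℂ
    intro v
    rw [ContinuousLinearMap.adjoint_inner_left]
    have key : ∀ (f' : L2Es) (g' : L2E),
        ⟪pr f g, A2 (pr f' g')⟫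
          = ⟪pr (Δs f) (ContinuousLinearMap.adjoint MΦ f + g), pr f' g'⟫ := by
      intro f' g'
      rw [hA2]
      show ⟪f, Δs f' + MΦ g'⟫ + ⟪g, g'⟫
        = ⟪Δs f, f'⟫ + ⟪ContinuousLinearMap.adjoint MΦ f + g, g'⟫
      rw [inner_add_right, inner_add_left, ContinuousLinearMap.adjoint_inner_left,
        hΔsflip]
      ring
    exact key (c1 v) (c2 v)
  -- S² = A1 A1*
  have hcomp1 : S ∘L S = A1 ∘L ContinuousLinearMap.adjoint A1 := by
    apply ContinuousLinearMap.ext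
    intro x
    have h2 : ContinuousLinearMap.adjoint MΦ (c1 x + MΦ (c2 x)) + Δ (Δ (c2 x))
        = ContinuousLinearMap.adjoint MΦ (c1 x) + c2 x := by
      rw [map_add, hΔ2']
      abel
    show S (S (pr (c1 x) (c2 x))) = A1 (ContinuousLinearMap.adjoint A1 (pr (c1 x) (c2 x)))
    rw [hS2, hA1adj, hA1, h2]
  -- S² = A2 A2*
  have hcomp2 : S ∘L S = A2 ∘L ContinuousLinearMap.adjoint A2 := by
    apply ContinuousLinearMap.ext
    intro x
    have h2 : Δs (Δs (c1 x)) + MΦ (ContinuousLinearMap.adjoint MΦ (c1 x) + c2 x)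
        = c1 x + MΦ (c2 x) := by
      rw [map_add, hΔs2']
      abel
    show S (S (pr (c1 x) (c2 x))) = A2 (ContinuousLinearMap.adjoint A2 (pr (c1 x) (c2 x)))
    rw [hS2, hA2adj, hA2, h2]
  obtain ⟨hr1, hm1⟩ := dbr_douglas S A1 hS hcomp1
  obtain ⟨hr2, hm2⟩ := dbr_douglas S A2 hS hcomp2
  -- the inner products agree
  have hip : ∀ z ∈ Set.range S, ipS z z = ipA1 z z ∧ ipS z z = ipA2 z z := by
    intro z hz
    constructor
    · obtain ⟨x, hx, y, hy, hSx, hAy, hxy⟩ := hm1 z hz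
      calc ipS z z = ipS (S x) (S x) := by rw [hSx]
        _ = ⟪x, x⟫ := hipS x x hx
        _ = (‖x‖ : ℂ) ^ 2 := inner_self_eq_norm_sq_to_K x
        _ = (‖y‖ : ℂ) ^ 2 := by rw [hxy]
        _ = ⟪y, y⟫ := (inner_self_eq_norm_sq_to_K y).symm
        _ = ipA1 (A1 y) (A1 y) := (hipA1 y y hy).symm
        _ = ipA1 z z := by rw [hAy]
    · obtain ⟨x, hx, y, hy, hSx, hAy, hxy⟩ := hm2 z hz
      calc ipS z z = ipS (S x) (S x) := by rw [hSx]
        _ = ⟪x, x⟫ := hipS x x hx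
        _ = (‖x‖ : ℂ) ^ 2 := inner_self_eq_norm_sq_to_K x
        _ = (‖y‖ : ℂ) ^ 2 := by rw [hxy]
        _ = ⟪y, y⟫ := (inner_self_eq_norm_sq_to_K y).symm
        _ = ipA2 (A2 y) (A2 y) := (hipA2 y y hy).symm
        _ = ipA2 z z := by rw [hAy]
  -- set characterisations
  have hset1 : Set.range A1
      = {p | c2 p - ContinuousLinearMap.adjoint MΦ (c1 p) ∈ Set.range Δ} := by
    ext p
    constructor
    · rintro ⟨w, rfl⟩
      have hw : A1 w = pr (c1 w) (ContinuousLinearMap.adjoint MΦ (c1 w) + Δ (c2 w)) :=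
        hA1 (c1 w) (c2 w)
      show c2 (A1 w) - ContinuousLinearMap.adjoint MΦ (c1 (A1 w)) ∈ Set.range Δ
      rw [hw]
      show ContinuousLinearMap.adjoint MΦ (c1 w) + Δ (c2 w)
          - ContinuousLinearMap.adjoint MΦ (c1 w) ∈ Set.range Δ
      exact ⟨c2 w, by abel⟩
    · intro hp
      obtain ⟨g, hg⟩ := hp
      refine ⟨pr (c1 p) g, ?_⟩
      have : ContinuousLinearMap.adjoint MΦ (c1 p) + Δ g = c2 p := by
        rw [hg]; abel
      rw [hA1, this]
      rfl
  have hset2 : Set.range A2 = {p | c1 p - MΦ (c2 p) ∈ Set.range Δs} := by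
    ext p
    constructor
    · rintro ⟨w, rfl⟩
      have hw : A2 w = pr (Δs (c1 w) + MΦ (c2 w)) (c2 w) := hA2 (c1 w) (c2 w)
      show c1 (A2 w) - MΦ (c2 (A2 w)) ∈ Set.range Δs
      rw [hw]
      show Δs (c1 w) + MΦ (c2 w) - MΦ (c2 w) ∈ Set.range Δs
      exact ⟨c1 w, by abel⟩
    · intro hp
      obtain ⟨f, hf⟩ := hp
      refine ⟨pr f (c2 p), ?_⟩
      have : Δs f + MΦ (c2 p) = c1 p := by
        rw [hf]; abel
      rw [hA2, this]
      rfl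
  exact ⟨hr1, hr2, hip, hr1.trans hset1, hr2.trans hset2⟩
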